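/- arXiv:2402.07471 — 3 statements merged into one kernel-verified Lean document; each statement's English description precedes it below -/
import Mathlib

section
/- Let W be an n×n real symmetric doubly stochastic irreducible aperiodic transition matrix with spectral decomposition W = (1/n)𝟙𝟙ᵀ + ∑_{j≥2} λ_j φ_j φ_jᵀ where |λ_j| < 1 for j ≥ 2. Then for any vertices u, v and any T ≥ 1, ∑_{t=1}^T (W^t)_{uv}/t ≤ (1/n)·∑_{t=1}^T 1/t − (ln(I − W + (1/n)𝟙𝟙ᵀ))_{uv} + λ₂^{T}·n/(1−λ₂), where λ₂ = max_{j≥2} |λ_j| < 1. -/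
open Matrix in
private lemma walk_pow_entry (n : ℕ) (W : Matrix (Fin n) (Fin n) ℝ) (lam : Fin n → ℝ)
    (phi : Fin n → Fin n → ℝ)
    (hspec : W = ∑ j : Fin n, lam j • Matrix.vecMulVec (phi j) (phi j))
    (horth : ∀ j j' : Fin n, phi j ⬝ᵥ phi j' = if j = j' then (1 : ℝ) else 0) :
    ∀ t : ℕ, 1 ≤ t → ∀ a b : Fin n, (W ^ t) a b = ∑ j : Fin n, lam j ^ t * (phi j a * phi j b) := by
  intro t
  induction t with
  | zero => intro h; omega
  | succ t ih =>
    intro _ a b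
    rcases Nat.eq_zero_or_pos t with ht | ht
    · subst ht
      rw [zero_add, pow_one, hspec]
      simp only [Matrix.sum_apply, Matrix.smul_apply, Matrix.vecMulVec_apply, smul_eq_mul,
        pow_one]
    · rw [pow_succ, Matrix.mul_apply]
      have h1 : ∀ k, (W ^ t) a k = ∑ j : Fin n, lam j ^ t * (phi j a * phi j k) := ih ht _
      have h2 : ∀ k, W k b = ∑ j : Fin n, lam j * (phi j k * phi j b) := by
        intro k
        rw [hspec]
        simp only [Matrix.sum_apply, Matrix.smul_apply, Matrix.vecMulVec_apply, smul_eq_mul]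
      simp only [h1, h2]
      simp only [Finset.sum_mul, Finset.mul_sum]
      rw [Finset.sum_comm]
      refine Finset.sum_congr rfl fun j _ => ?_
      rw [Finset.sum_comm]
      have hinner : ∀ y : Fin n, ∑ x : Fin n, lam y ^ t * (phi y a * phi y x) * (lam j * (phi j x * phi j b))
          = (lam y ^ t * lam j * (phi y a * phi j b)) * (phi y ⬝ᵥ phi j) := by
        intro y
        simp only [dotProduct, Finset.mul_sum]
        refine Finset.sum_congr rfl fun k _ => by ring
      simp only [hinner, horth, mul_ite, mul_one, mul_zero]
      rw [Finset.sum_ite_eq' Finset.univ j (fun y => lam y ^ t * lam j * (phi y a * phi j b))]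
      simp [pow_succ]

open Matrix in
theorem walk_partial_sum_bound (n : ℕ) [NeZero n]
    (W : Matrix (Fin n) (Fin n) ℝ) (lam : Fin n → ℝ)
    (phi : Fin n → Fin n → ℝ) (j0 : Fin n)
    (hsym : W.IsSymm)
    (hspec : W = ∑ j : Fin n, lam j • Matrix.vecMulVec (phi j) (phi j))
    (horth : ∀ j j' : Fin n, phi j ⬝ᵥ phi j' = if j = j' then (1 : ℝ) else 0)
    (hl0 : lam j0 = 1)
    (hphi0 : phi j0 = fun _ => 1 / Real.sqrt n)
    (hl : ∀ j : Fin n, j ≠ j0 → |lam j| < 1)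
    (l2 : ℝ) (hl2 : ∀ j : Fin n, j ≠ j0 → |lam j| ≤ l2)
    (hl2nonneg : 0 ≤ l2) (hl2lt : l2 < 1)
    (u v : Fin n) (T : ℕ) (hT : 1 ≤ T) :
    ∑ t ∈ Finset.Icc 1 T, (W ^ t) u v / t ≤
      (1 / n) * (∑ t ∈ Finset.Icc 1 T, (1 : ℝ) / t) -
        (∑ j : Fin n, Real.log (1 - (if j = j0 then 0 else lam j)) •
          Matrix.vecMulVec (phi j) (phi j)) u v +
        l2 ^ T * n / (1 - l2) := by
  have hn : (0 : ℝ) < n := by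
    have := Nat.pos_of_ne_zero (NeZero.ne n)
    exact_mod_cast this
  -- the partial sums
  set S : Fin n → ℝ := fun j => ∑ t ∈ Finset.Icc 1 T, lam j ^ t / t with hS
  -- rewrite the LHS
  have hLHS : ∑ t ∈ Finset.Icc 1 T, (W ^ t) u v / t
      = ∑ j : Fin n, phi j u * phi j v * S j := by
    have step1 : ∀ t ∈ Finset.Icc 1 T, (W ^ t) u v / t
        = ∑ j : Fin n, phi j u * phi j v * (lam j ^ t / t) := by
      intro t ht
      rw [walk_pow_entry n W lam phi hspec horth t (Finset.mem_Icc.mp ht).1 u v,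
        Finset.sum_div]
      exact Finset.sum_congr rfl fun j _ => by ring
    rw [Finset.sum_congr rfl step1, Finset.sum_comm]
    exact Finset.sum_congr rfl fun j _ => by rw [hS, Finset.mul_sum]
  -- rewrite the log term
  have hLog : (∑ j : Fin n, Real.log (1 - (if j = j0 then 0 else lam j)) •
        Matrix.vecMulVec (phi j) (phi j)) u v
      = ∑ j ∈ Finset.univ \ {j0}, Real.log (1 - lam j) * (phi j u * phi j v) := by
    simp only [Matrix.sum_apply, Matrix.smul_apply, Matrix.vecMulVec_apply, smul_eq_mul]
    rw [Finset.sum_eq_sum_sdiff_singleton_add (Finset.mem_univ j0)]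
    have hz : Real.log (1 - (if j0 = j0 then (0:ℝ) else lam j0)) * (phi j0 u * phi j0 v) = 0 := by
      simp
    rw [hz, add_zero]
    refine Finset.sum_congr rfl fun j hj => ?_
    rw [if_neg (by simpa using (Finset.mem_sdiff.mp hj).2)]
  -- the j0 term
  have hphi0uv : phi j0 u * phi j0 v = 1 / n := by
    rw [hphi0]
    simp only
    rw [div_mul_div_comm, one_mul, Real.mul_self_sqrt hn.le]
  have hSj0 : S j0 = ∑ t ∈ Finset.Icc 1 T, (1 : ℝ) / t := by
    simp [hS, hl0]
  -- the per-eigenvalue bound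
  have hc : (0 : ℝ) ≤ l2 ^ T / (1 - l2) :=
    div_nonneg (pow_nonneg hl2nonneg T) (by linarith)
  have key : ∀ j ∈ Finset.univ \ {j0},
      phi j u * phi j v * S j + Real.log (1 - lam j) * (phi j u * phi j v)
        ≤ l2 ^ T / (1 - l2) := by
    intro j hj
    have hjne : j ≠ j0 := by simpa using (Finset.mem_sdiff.mp hj).2
    have hx : |lam j| < 1 := hl j hjne
    have hxl2 : |lam j| ≤ l2 := hl2 j hjne
    have hrange : S j = ∑ i ∈ Finset.range T, lam j ^ (i + 1) / (i + 1) := by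
      rw [hS]
      simp only
      rw [← Finset.Ico_add_one_right_eq_Icc, Finset.sum_Ico_eq_sum_range]
      refine Finset.sum_congr (by norm_num) fun i _ => ?_
      push_cast
      rw [add_comm 1 i, add_comm (1:ℝ) (i:ℝ)]
    have hlog := Real.abs_log_sub_add_sum_range_le hx T
    rw [← hrange] at hlog
    have h2 : |lam j| ^ (T + 1) / (1 - |lam j|) ≤ l2 ^ T / (1 - l2) := by
      refine div_le_div₀ (pow_nonneg hl2nonneg T) ?_ (by linarith) (by linarith)
      calc |lam j| ^ (T + 1) ≤ l2 ^ (T + 1) :=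
            pow_le_pow_left₀ (abs_nonneg _) hxl2 (T + 1)
        _ ≤ l2 ^ T := pow_le_pow_of_le_one hl2nonneg hl2lt.le (Nat.le_succ T)
    have hphib : |phi j u * phi j v| ≤ 1 := by
      have h1 : ∀ a : Fin n, phi j a * phi j a ≤ 1 := by
        intro a
        have horthjj := horth j j
        simp only [dotProduct, if_pos rfl] at horthjj
        calc phi j a * phi j a
            ≤ ∑ k : Fin n, phi j k * phi j k :=
              Finset.single_le_sum (f := fun k => phi j k * phi j k)
                (fun k _ => mul_self_nonneg _) (Finset.mem_univ a)
          _ = 1 := horthjj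
      rw [abs_mul]
      exact mul_le_one₀ (abs_le_one_iff_mul_self_le_one.mpr (h1 u)) (abs_nonneg _)
        (abs_le_one_iff_mul_self_le_one.mpr (h1 v))
    calc phi j u * phi j v * S j + Real.log (1 - lam j) * (phi j u * phi j v)
        = (phi j u * phi j v) * (S j + Real.log (1 - lam j)) := by ring
      _ ≤ |(phi j u * phi j v) * (S j + Real.log (1 - lam j))| := le_abs_self _
      _ = |phi j u * phi j v| * |S j + Real.log (1 - lam j)| := abs_mul _ _
      _ ≤ 1 * (l2 ^ T / (1 - l2)) :=
          mul_le_mul hphib (hlog.trans h2) (abs_nonneg _) zero_le_one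
      _ = l2 ^ T / (1 - l2) := one_mul _
  have hmain : ∑ j ∈ Finset.univ \ {j0},
      (phi j u * phi j v * S j + Real.log (1 - lam j) * (phi j u * phi j v))
        ≤ l2 ^ T * n / (1 - l2) := by
    calc ∑ j ∈ Finset.univ \ {j0},
        (phi j u * phi j v * S j + Real.log (1 - lam j) * (phi j u * phi j v))
        ≤ ∑ _j ∈ Finset.univ \ {j0}, (l2 ^ T / (1 - l2)) := Finset.sum_le_sum key
      _ = (Finset.univ \ {j0} : Finset (Fin n)).card • (l2 ^ T / (1 - l2)) :=
          Finset.sum_const _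
      _ = ((Finset.univ \ {j0} : Finset (Fin n)).card : ℝ) * (l2 ^ T / (1 - l2)) := by
          rw [nsmul_eq_mul]
      _ ≤ (n : ℝ) * (l2 ^ T / (1 - l2)) := by
          refine mul_le_mul_of_nonneg_right ?_ hc
          have hcard : (Finset.univ \ {j0} : Finset (Fin n)).card ≤ n := by
            calc (Finset.univ \ {j0} : Finset (Fin n)).card
                ≤ (Finset.univ : Finset (Fin n)).card :=
                  Finset.card_le_card (Finset.sdiff_subset)
              _ = n := Finset.card_univ.trans (Fintype.card_fin n)
          exact_mod_cast hcard
      _ = l2 ^ T * n / (1 - l2) := by ring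
  rw [hLHS, hLog, Finset.sum_eq_sum_sdiff_singleton_add (Finset.mem_univ j0),
    hphi0uv, hSj0]
  rw [Finset.sum_add_distrib] at hmain
  linarith
end

section
/- For the star graph with transition matrix W = A/(n−1) and vertices u, v with exactly one of them the center (u = 1 xor v = 1), the series ∑_{p=1}^∞ (W^p)_{uv}/p is bounded above by (1/(2√(n−1)))·ln((√(n−1)+1)/(√(n−1)−1)) for n ≥ 3. -/
open Finset

theorem star_center_privacy (n : ℕ) (hn : 3 ≤ n) [NeZero n]
    (A W : Matrix (Fin n) (Fin n) ℝ)
    (hA : ∀ u v : Fin n, A u v = if (u = 0 ∨ v = 0) ∧ u ≠ v then 1 else 0)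
    (hW : W = ((n : ℝ) - 1)⁻¹ • A)
    (u v : Fin n) (huv : (u = 0 ∧ v ≠ 0) ∨ (u ≠ 0 ∧ v = 0)) :
    (∑' p : ℕ, (W ^ (p + 1)) u v / (p + 1)) ≤
      (2 * Real.sqrt ((n : ℝ) - 1))⁻¹ *
        Real.log ((Real.sqrt ((n : ℝ) - 1) + 1) / (Real.sqrt ((n : ℝ) - 1) - 1)) := by
  have hn2 : (2:ℝ) ≤ (n:ℝ) - 1 := by
    have : (3:ℝ) ≤ (n:ℝ) := by exact_mod_cast hn
    linarith
  set c : ℝ := ((n:ℝ) - 1)⁻¹ with hc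
  set s : ℝ := Real.sqrt ((n:ℝ) - 1) with hs
  have hsnn : 0 ≤ s := Real.sqrt_nonneg _
  have hssq : s ^ 2 = (n:ℝ) - 1 := Real.sq_sqrt (by linarith)
  have hs1 : 1 < s := by nlinarith [hssq, hsnn]
  have hs0 : 0 < s := by linarith
  set x : ℝ := s⁻¹ with hx
  have hx0 : 0 < x := by positivity
  have hx1 : x < 1 := by
    rw [hx, inv_lt_one_iff₀]; right; exact hs1
  have hcx : c = x ^ 2 := by rw [hc, ← hssq, hx, inv_pow]
  have hne : ((n:ℝ) - 1) ≠ 0 := by linarith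
  have hnc : ((n:ℝ) - 1) * c = 1 := mul_inv_cancel₀ hne
  -- entry values of W
  have hWentry : ∀ w y : Fin n, W w y = if (w = 0 ∨ y = 0) ∧ w ≠ y then c else 0 := by
    intro w y
    rw [hW, Matrix.smul_apply, hA, smul_eq_mul]
    split_ifs <;> simp [hc]
  -- the three entry functions
  set off : ℕ → ℝ := fun p => if p % 2 = 1 then c ^ ((p+1)/2) else 0 with hoff
  set dg : ℕ → ℝ := fun p => if p % 2 = 1 then 0 else c ^ (p/2) with hdg
  set lf : ℕ → ℝ := fun p => if p % 2 = 1 then 0 else c ^ (p/2 + 1) with hlf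
  have hoffodd : ∀ k, off (2*k+1) = c ^ (k+1) := by
    intro k
    simp only [hoff]
    rw [if_pos (by omega)]
    congr 1; omega
  have hoffeven : ∀ k, off (2*k) = 0 := by
    intro k; simp only [hoff]; rw [if_neg (by omega)]
  have hdgodd : ∀ k, dg (2*k+1) = 0 := by
    intro k; simp only [hdg]; rw [if_pos (by omega)]
  have hdgeven : ∀ k, dg (2*k) = c ^ k := by
    intro k; simp only [hdg]; rw [if_neg (by omega)]; congr 1; omega
  have hlfodd : ∀ k, lf (2*k+1) = 0 := by
    intro k; simp only [hlf]; rw [if_pos (by omega)]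
  have hlfeven : ∀ k, lf (2*k) = c ^ (k+1) := by
    intro k; simp only [hlf]; rw [if_neg (by omega)]; congr 2; omega
  -- recurrence identities
  have idA : ∀ p, dg (p+2) = off (p+1) := by
    intro p
    rcases Nat.even_or_odd p with ⟨k, hk⟩ | ⟨k, hk⟩ <;> subst hk
    · rw [show k + k + 2 = 2*(k+1) by ring, show k + k + 1 = 2*k+1 by ring,
        hdgeven, hoffodd]
    · rw [show 2*k+1+2 = 2*(k+1)+1 by ring, show 2*k+1+1 = 2*(k+1) by ring,
        hdgodd, hoffeven]
  have idB : ∀ p, off (p+2) = lf (p+1) := by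
    intro p
    rcases Nat.even_or_odd p with ⟨k, hk⟩ | ⟨k, hk⟩ <;> subst hk
    · rw [show k + k + 2 = 2*(k+1) by ring, show k + k + 1 = 2*k+1 by ring,
        hoffeven, hlfodd]
    · rw [show 2*k+1+2 = 2*(k+1)+1 by ring, show 2*k+1+1 = 2*(k+1) by ring,
        hoffodd, hlfeven]
  have idC : ∀ p, off (p+2) = c * dg (p+1) := by
    intro p
    rcases Nat.even_or_odd p with ⟨k, hk⟩ | ⟨k, hk⟩ <;> subst hk
    · rw [show k + k + 2 = 2*(k+1) by ring, show k + k + 1 = 2*k+1 by ring,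
        hoffeven, hdgodd, mul_zero]
    · rw [show 2*k+1+2 = 2*(k+1)+1 by ring, show 2*k+1+1 = 2*(k+1) by ring,
        hoffodd, hdgeven]
      ring
  have idD : ∀ p, lf (p+2) = c * off (p+1) := by
    intro p
    rcases Nat.even_or_odd p with ⟨k, hk⟩ | ⟨k, hk⟩ <;> subst hk
    · rw [show k + k + 2 = 2*(k+1) by ring, show k + k + 1 = 2*k+1 by ring,
        hlfeven, hoffodd]
      ring
    · rw [show 2*k+1+2 = 2*(k+1)+1 by ring, show 2*k+1+1 = 2*(k+1) by ring,
        hlfodd, hoffeven, mul_zero]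
  have hcard : ((univ.erase (0 : Fin n)).card : ℝ) = (n:ℝ) - 1 := by
    rw [Finset.card_erase_of_mem (mem_univ _), Finset.card_univ, Fintype.card_fin]
    have h1 : 1 ≤ n := by omega
    rw [Nat.cast_sub h1, Nat.cast_one]
  -- the key entrywise formula for powers of W
  have key : ∀ p : ℕ, ∀ a b : Fin n, (W ^ (p+1)) a b =
      if a = 0 then (if b = 0 then dg (p+1) else off (p+1))
      else (if b = 0 then off (p+1) else lf (p+1)) := by
    intro p
    induction p with
    | zero =>
      intro a b
      rw [pow_one, hWentry]
      have o1 : off 1 = c := by simpa using hoffodd 0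
      have d1 : dg 1 = 0 := by simpa using hdgodd 0
      have l1 : lf 1 = 0 := by simpa using hlfodd 0
      by_cases ha : a = 0 <;> by_cases hb : b = 0
      · subst ha; subst hb
        rw [if_neg (by simp), if_pos rfl, if_pos rfl, d1]
      · subst ha
        rw [if_pos ⟨Or.inl rfl, fun h => hb h.symm⟩, if_pos rfl, if_neg hb, o1]
      · subst hb
        rw [if_pos ⟨Or.inr rfl, ha⟩, if_neg ha, if_pos rfl, o1]
      · rw [if_neg (show ¬((a = 0 ∨ b = 0) ∧ a ≠ b) by
            rintro ⟨h1 | h2, -⟩; exacts [ha h1, hb h2]), if_neg ha, if_neg hb, l1]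
    | succ p ih =>
      intro a b
      have hmul : (W ^ (p+2)) a b = ∑ w : Fin n, (W ^ (p+1)) a w * W w b := by
        rw [pow_succ, Matrix.mul_apply]
      by_cases hb : b = 0
      · subst hb
        have hsum : ∑ w : Fin n, (W ^ (p+1)) a w * W w 0 =
            ∑ w ∈ univ.erase (0 : Fin n), (W ^ (p+1)) a w * W w 0
              + (W ^ (p+1)) a 0 * W 0 0 := by
          rw [Finset.sum_erase_add _ _ (mem_univ _)]
        have hW00 : W 0 0 = 0 := by rw [hWentry]; simp
        have hconst : ∀ w ∈ univ.erase (0 : Fin n),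
            (W ^ (p+1)) a w * W w 0 = (if a = 0 then off (p+1) else lf (p+1)) * c := by
          intro w hw
          have hw0 : w ≠ 0 := by simpa using (Finset.mem_erase.mp hw).1
          have hWw0 : W w 0 = c := by
            rw [hWentry, if_pos (show (w = 0 ∨ (0:Fin n) = 0) ∧ w ≠ 0 from
              ⟨Or.inr rfl, hw0⟩)]
          rw [ih a w, hWw0, if_neg hw0, if_neg hw0]
        rw [hmul, hsum, hW00, mul_zero, add_zero, Finset.sum_congr rfl hconst,
          Finset.sum_const, nsmul_eq_mul, hcard]
        by_cases ha : a = 0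
        · rw [if_pos ha, if_pos ha, if_pos (rfl : (0:Fin n) = 0),
            show ((n:ℝ)-1) * (off (p+1) * c) = ((n:ℝ)-1) * c * off (p+1) by ring,
            hnc, one_mul, idA]
        · rw [if_neg ha, if_neg ha, if_pos (rfl : (0:Fin n) = 0),
            show ((n:ℝ)-1) * (lf (p+1) * c) = ((n:ℝ)-1) * c * lf (p+1) by ring,
            hnc, one_mul, idB]
      · have hWwb : ∀ w : Fin n, W w b = if w = 0 then c else 0 := by
          intro w
          rw [hWentry]
          by_cases hw0 : w = 0
          · rw [if_pos ⟨Or.inl hw0, by rw [hw0]; exact fun h => hb h.symm⟩, if_pos hw0]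
          · rw [if_neg (by rintro ⟨h1 | h2, -⟩; exact hw0 h1; exact hb h2), if_neg hw0]
        have hsum : ∑ w : Fin n, (W ^ (p+1)) a w * W w b = (W ^ (p+1)) a 0 * c := by
          rw [Finset.sum_eq_single (0 : Fin n)]
          · rw [hWwb, if_pos rfl]
          · intro w _ hw0
            rw [hWwb, if_neg hw0, mul_zero]
          · intro h; exact absurd (mem_univ _) h
        rw [hmul, hsum, ih a 0]
        by_cases ha : a = 0
        · rw [if_pos ha, if_pos ha, if_pos (rfl : (0:Fin n) = 0), if_neg hb, idC]
          ring
        · rw [if_neg ha, if_neg ha, if_pos (rfl : (0:Fin n) = 0), if_neg hb, idD]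
          ring
  -- the series entries
  have hentry : ∀ p : ℕ, (W ^ (p+1)) u v = off (p+1) := by
    intro p
    rcases huv with ⟨hu, hv⟩ | ⟨hu, hv⟩
    · rw [key p u v, if_pos hu, if_neg hv]
    · rw [key p u v, if_neg hu, if_pos hv]
  -- the power series for log
  have habs : |x| < 1 := by rw [abs_of_pos hx0]; exact hx1
  have habs' : |(-x)| < 1 := by rwa [abs_neg]
  have h1 := Real.hasSum_pow_div_log_of_abs_lt_one habs
  have h2 := Real.hasSum_pow_div_log_of_abs_lt_one habs'
  have h3 := (h1.sub h2).mul_left (x/2)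
  have hfun : (fun p : ℕ => x/2 * (x ^ (p+1) / (p+1) - (-x) ^ (p+1) / (p+1)))
      = fun p : ℕ => off (p+1) / (p+1) := by
    funext p
    rcases Nat.even_or_odd p with ⟨k, hk⟩ | ⟨k, hk⟩ <;> subst hk
    · have hodd : Odd (k + k + 1) := ⟨k, by ring⟩
      rw [Odd.neg_pow hodd, show k + k + 1 = 2*k+1 by ring, hoffodd, hcx]
      have hcast : ((k + k : ℕ) : ℝ) = 2 * (k : ℝ) := by push_cast; ring
      rw [hcast]
      field_simp
      ring
    · have heven : Even (2*k+1+1) := ⟨k+1, by ring⟩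
      rw [Even.neg_pow heven, show 2*k+1+1 = 2*(k+1) by ring, hoffeven]
      simp
  have h4 : HasSum (fun p : ℕ => off (p+1) / (p+1))
      (x/2 * (-Real.log (1-x) - -Real.log (1+x))) := by
    simp only [show (1:ℝ) - -x = 1 + x from by ring] at h3
    rw [← hfun]; exact h3
  have htsum : (∑' p : ℕ, (W ^ (p + 1)) u v / (p + 1))
      = x/2 * (-Real.log (1-x) - -Real.log (1+x)) := by
    rw [show (fun p : ℕ => (W ^ (p + 1)) u v / (p + 1))
        = fun p : ℕ => off (p+1) / (p+1) from funext fun p => by rw [hentry p]]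
    exact h4.tsum_eq
  rw [htsum]
  apply le_of_eq
  have h1x : (0:ℝ) < 1 - x := by linarith
  have h1x' : (0:ℝ) < 1 + x := by linarith
  have hsm1 : (0:ℝ) < s - 1 := by linarith
  have hdiveq : (1 + x) / (1 - x) = (s + 1) / (s - 1) := by
    rw [hx]
    field_simp
  rw [show (2 * s)⁻¹ = x / 2 by rw [hx]; field_simp,
    ← hdiveq, Real.log_div (by linarith) (by linarith)]
  ring
end

section
/- For any n ≥ 2 and x = 1/√(n−1) ∈ (0,1] with n ≥ 3 so that x < 1, the bound (1/(2√(n−1)))·ln((√(n−1)+1)/(√(n−1)−1)) is at least −(1/(n−1))·ln(1 − 1/(n−1)); i.e., in the star graph the privacy loss bound involving the center is larger (by roughly a factor √(n−1)) than the leaf-to-leaf bound, and asymptotically the center bound is Θ(1/(n)) while the leaf-to-leaf bound is Θ(1/n²) as n → ∞. -/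
open Real Filter

private lemma sqrt_tendsto_atTop : Tendsto Real.sqrt atTop atTop := by
  rw [tendsto_atTop_atTop]
  intro b
  exact ⟨b ^ 2, fun a ha => by
    rcases le_or_gt b 0 with h | h
    · exact h.trans (Real.sqrt_nonneg a)
    · exact (Real.le_sqrt h.le ((sq_nonneg b).trans ha)).2 ha⟩

private lemma nat_sub_one_tendsto : Tendsto (fun n : ℕ => (n : ℝ) - 1) atTop atTop :=
  tendsto_atTop_add_const_right _ _ tendsto_natCast_atTop_atTop

private lemma ratio_tendsto : Tendsto (fun n : ℕ => (n : ℝ) / ((n : ℝ) - 1)) atTop (nhds 1) := by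
  have h0 : Tendsto (fun n : ℕ => ((n : ℝ) - 1)⁻¹) atTop (nhds 0) :=
    tendsto_inv_atTop_zero.comp nat_sub_one_tendsto
  have h1 : Tendsto (fun n : ℕ => 1 + ((n : ℝ) - 1)⁻¹) atTop (nhds (1 + 0)) :=
    tendsto_const_nhds.add h0
  rw [add_zero] at h1
  refine h1.congr' ?_
  filter_upwards [eventually_ge_atTop 2] with n hn
  have hm : ((n : ℝ) - 1) ≠ 0 := by
    have : (2 : ℝ) ≤ (n : ℝ) := by exact_mod_cast hn
    linarith
  field_simp
  ring

theorem star_bounds_comparison :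
    (∀ n : ℕ, 3 ≤ n →
      -((1 : ℝ) / ((n : ℝ) - 1)) * Real.log (1 - 1 / ((n : ℝ) - 1)) ≤
        (1 / (2 * Real.sqrt ((n : ℝ) - 1))) *
          Real.log ((Real.sqrt ((n : ℝ) - 1) + 1) / (Real.sqrt ((n : ℝ) - 1) - 1))) ∧
    Filter.Tendsto (fun n : ℕ => (n : ℝ) *
        ((1 / (2 * Real.sqrt ((n : ℝ) - 1))) *
          Real.log ((Real.sqrt ((n : ℝ) - 1) + 1) / (Real.sqrt ((n : ℝ) - 1) - 1))))
      Filter.atTop (nhds 1) ∧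
    Filter.Tendsto (fun n : ℕ => (n : ℝ) ^ 2 *
        (-((1 : ℝ) / ((n : ℝ) - 1)) * Real.log (1 - 1 / ((n : ℝ) - 1))))
      Filter.atTop (nhds 1) := by
  refine ⟨?_, ?_, ?_⟩
  · -- Part 1: inequality
    intro n hn
    set m : ℝ := (n : ℝ) - 1 with hmdef
    have hm2 : (2 : ℝ) ≤ m := by
      have : (3 : ℝ) ≤ (n : ℝ) := by exact_mod_cast hn
      simp [hmdef]; linarith
    have hm0 : (0 : ℝ) < m := by linarith
    set s : ℝ := Real.sqrt m with hsdef
    have hs2 : s ^ 2 = m := Real.sq_sqrt hm0.le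
    have hs0 : (0 : ℝ) ≤ s := Real.sqrt_nonneg m
    have hs1 : (1 : ℝ) < s := by nlinarith
    rcases eq_or_lt_of_le hm2 with hm | hm3
    · -- m = 2, i.e. n = 3
      have hm' : m = 2 := hm.symm
      have h2 : Real.sqrt 2 ^ 2 = 2 := Real.sq_sqrt (by norm_num)
      have hs : s = Real.sqrt 2 := by rw [hsdef, hm']
      have hsr1 : (1 : ℝ) < Real.sqrt 2 := by rw [← hs]; exact hs1
      have hsr2 : Real.sqrt 2 ≤ 2 := by nlinarith [Real.sqrt_nonneg 2]
      have key : (Real.sqrt 2 + 1) / (Real.sqrt 2 - 1) = (Real.sqrt 2 + 1) ^ 2 := by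
        rw [div_eq_iff (by linarith)]; nlinarith
      rw [hm', hs, key, Real.log_pow]
      have hlhs : (1 : ℝ) - 1 / 2 = 2⁻¹ := by norm_num
      rw [hlhs, Real.log_inv]
      have hlog2 : Real.log 2 ≤ Real.log (Real.sqrt 2 + 1) :=
        Real.log_le_log (by norm_num) (by linarith)
      have hlog2n : (0 : ℝ) ≤ Real.log 2 := Real.log_nonneg (by norm_num)
      have e1 : -(1 / 2 : ℝ) * -Real.log 2 = (1 / 2) * Real.log 2 := by ring
      rw [e1]
      have e2 : (1 / (2 * Real.sqrt 2)) * ((2 : ℕ) * Real.log (Real.sqrt 2 + 1))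
          = (1 / Real.sqrt 2) * Real.log (Real.sqrt 2 + 1) := by
        push_cast
        field_simp
      rw [e2]
      apply mul_le_mul _ hlog2 hlog2n (by positivity)
      rw [div_le_div_iff₀ (by norm_num) (by linarith)]
      linarith
    · -- 2 < m, i.e. m ≥ 3
      have hm3' : (3 : ℝ) ≤ m := by
        have : (4 : ℝ) ≤ (n : ℝ) := by
          have : 4 ≤ n := by
            by_contra h
            push_neg at h
            interval_cases n <;> simp_all [hmdef] <;> norm_num at hm3
          exact_mod_cast this
        simp [hmdef]; linarith
      have hsm : s ≤ m := by nlinarith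
      -- LHS upper bound
      have hfrac : (1 : ℝ) - 1 / m = (m - 1) / m := by field_simp
      have hm1 : m - 1 ≠ 0 := by linarith
      have hpos1 : (0 : ℝ) < m / (m - 1) := div_pos hm0 (by linarith)
      have hlog1 : -Real.log (1 - 1 / m) ≤ 1 / (m - 1) := by
        rw [hfrac]
        have hinv : ((m - 1) / m)⁻¹ = m / (m - 1) := by rw [inv_div]
        rw [← Real.log_inv, hinv]
        have := Real.log_le_sub_one_of_pos hpos1
        have he : m / (m - 1) - 1 = 1 / (m - 1) := by
          field_simp
          ring
        linarith [he ▸ this]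
      -- RHS lower bound
      have hpos2 : (0 : ℝ) < (s - 1) / (s + 1) := by
        apply div_pos <;> linarith
      have hlog2 : 2 / (s + 1) ≤ Real.log ((s + 1) / (s - 1)) := by
        have hinv : ((s - 1) / (s + 1))⁻¹ = (s + 1) / (s - 1) := by rw [inv_div]
        rw [← hinv, Real.log_inv]
        have := Real.log_le_sub_one_of_pos hpos2
        have he : (s - 1) / (s + 1) - 1 = -(2 / (s + 1)) := by field_simp; ring
        linarith [he ▸ this]
      calc -((1 : ℝ) / m) * Real.log (1 - 1 / m)
          = (1 / m) * (-Real.log (1 - 1 / m)) := by ring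
        _ ≤ (1 / m) * (1 / (m - 1)) := by
            apply mul_le_mul_of_nonneg_left hlog1 (by positivity)
        _ = 1 / (m * (m - 1)) := by rw [div_mul_div_comm, one_mul]
        _ ≤ 1 / (s * (s + 1)) := by
            apply one_div_le_one_div_of_le (mul_pos (by linarith) (by linarith))
            nlinarith
        _ = (1 / (2 * s)) * (2 / (s + 1)) := by
            field_simp
        _ ≤ (1 / (2 * s)) * Real.log ((s + 1) / (s - 1)) := by
            apply mul_le_mul_of_nonneg_left hlog2 (by positivity)
  · -- Part 2: n * B1 n → 1
    have hst : Tendsto (fun n : ℕ => Real.sqrt ((n : ℝ) - 1)) atTop atTop :=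
      sqrt_tendsto_atTop.comp nat_sub_one_tendsto
    have hp : Tendsto (fun n : ℕ => Real.sqrt ((n : ℝ) - 1) *
        Real.log (1 + 1 / Real.sqrt ((n : ℝ) - 1))) atTop (nhds 1) :=
      (Real.tendsto_mul_log_one_add_div_atTop 1).comp hst
    have hq : Tendsto (fun n : ℕ => Real.sqrt ((n : ℝ) - 1) *
        Real.log (1 + (-1) / Real.sqrt ((n : ℝ) - 1))) atTop (nhds (-1)) :=
      (Real.tendsto_mul_log_one_add_div_atTop (-1)).comp hst
    have hr : Tendsto (fun n : ℕ => (1 / 2 : ℝ) * ((n : ℝ) / ((n : ℝ) - 1))) atTop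
        (nhds ((1 / 2) * 1)) := tendsto_const_nhds.mul ratio_tendsto
    have hmain : Tendsto (fun n : ℕ => ((1 / 2 : ℝ) * ((n : ℝ) / ((n : ℝ) - 1))) *
        (Real.sqrt ((n : ℝ) - 1) * Real.log (1 + 1 / Real.sqrt ((n : ℝ) - 1)) -
         Real.sqrt ((n : ℝ) - 1) * Real.log (1 + (-1) / Real.sqrt ((n : ℝ) - 1))))
        atTop (nhds (((1 / 2) * 1) * (1 - (-1)))) := hr.mul (hp.sub hq)
    have : ((1 / 2 : ℝ) * 1) * (1 - (-1)) = 1 := by norm_num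
    rw [this] at hmain
    refine hmain.congr' ?_
    filter_upwards [eventually_ge_atTop 3] with n hn
    have hnr : (3 : ℝ) ≤ (n : ℝ) := by exact_mod_cast hn
    set s : ℝ := Real.sqrt ((n : ℝ) - 1) with hsdef
    have hm0 : (0 : ℝ) < (n : ℝ) - 1 := by linarith
    have hs2 : s ^ 2 = (n : ℝ) - 1 := Real.sq_sqrt hm0.le
    have hs0 : (0 : ℝ) < s := Real.sqrt_pos.mpr hm0
    have hs1' : (1 : ℝ) < s := by nlinarith
    have e1 : 1 + 1 / s = (s + 1) / s := by field_simp
    have e2 : 1 + (-1) / s = (s - 1) / s := by field_simp; ring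
    rw [e1, e2, Real.log_div (by linarith) (by linarith),
      Real.log_div (by linarith) (by linarith),
      Real.log_div (by linarith : s + 1 ≠ 0) (by linarith : s - 1 ≠ 0), ← hs2]
    field_simp
    ring
  · -- Part 3: n^2 * B2 n → 1
    have hq : Tendsto (fun n : ℕ => ((n : ℝ) - 1) *
        Real.log (1 + (-1) / ((n : ℝ) - 1))) atTop (nhds (-1)) :=
      (Real.tendsto_mul_log_one_add_div_atTop (-1)).comp nat_sub_one_tendsto
    have hr : Tendsto (fun n : ℕ => -(((n : ℝ) / ((n : ℝ) - 1)) ^ 2)) atTop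
        (nhds (-(1 ^ 2))) := ((ratio_tendsto.pow 2)).neg
    have hmain : Tendsto (fun n : ℕ => (-(((n : ℝ) / ((n : ℝ) - 1)) ^ 2)) *
        (((n : ℝ) - 1) * Real.log (1 + (-1) / ((n : ℝ) - 1)))) atTop
        (nhds ((-(1 ^ 2)) * (-1))) := hr.mul hq
    have : ((-(1 ^ 2)) * (-1) : ℝ) = 1 := by norm_num
    rw [this] at hmain
    refine hmain.congr' ?_
    filter_upwards [eventually_ge_atTop 2] with n hn
    have hnr : (2 : ℝ) ≤ (n : ℝ) := by exact_mod_cast hn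
    have hne : ((n : ℝ) - 1) ≠ 0 := by linarith
    have e : 1 + (-1) / ((n : ℝ) - 1) = 1 - 1 / ((n : ℝ) - 1) := by ring
    rw [e]
    field_simp
end
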